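/- Let B ⊂ ℝ^d be an open ball, let A ∈ ℝ^{d×d} be a constant symmetric positive definite matrix, let χ(x) = |x − x₀|² − r² be the quadratic polynomial vanishing on ∂B (x₀ the center, r the radius), and fix k ≥ 2. Then the linear map Q : ℙ_{k−2} → ℙ_{k−2} defined by Q(v) = −∑_{i,j} A_{ij} ∂_i∂_j (χ v) is a bijection of the space of polynomials of degree at most k−2. -/

import Mathlib

open MvPolynomial

namespace Stmt4Aux

variable {d : ℕ}

local notation "P" => MvPolynomial (Fin d) ℝ






theorem coeff_pderiv (i : Fin d) (p : P) (α : Fin d →₀ ℕ) :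
    coeff α (pderiv i p) = ((α i + 1 : ℕ) : ℝ) * coeff (α + Finsupp.single i 1) p := by
  induction p using MvPolynomial.induction_on' with
  | add p q hp hq => simp [hp, hq, mul_add]
  | monomial s a =>
    rw [pderiv_monomial, coeff_monomial, coeff_monomial]
    by_cases h : s = α + Finsupp.single i 1
    · subst h
      rw [if_pos (add_tsub_cancel_right α (Finsupp.single i 1)), if_pos rfl]
      simp [mul_comm]
    · rw [if_neg h]
      by_cases h2 : s - Finsupp.single i 1 = α
      · have hsi : s i = 0 := by
          by_contra hsi
          apply h
          rw [← h2, tsub_add_cancel_of_le]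
          rwa [Finsupp.single_le_iff, Nat.one_le_iff_ne_zero]
        rw [if_pos h2, hsi]
        simp
      · rw [if_neg h2, mul_zero]

/-- product of factorials of the exponents, as a real number -/
noncomputable def fac (α : Fin d →₀ ℕ) : ℝ := ∏ j, ((α j).factorial : ℝ)

theorem fac_pos (α : Fin d →₀ ℕ) : 0 < fac α :=
  Finset.prod_pos fun j _ => by positivity

theorem fac_add_single (α : Fin d →₀ ℕ) (i : Fin d) :
    fac (α + Finsupp.single i 1) = ((α i + 1 : ℕ) : ℝ) * fac α := by
  unfold fac
  rw [Finset.prod_congr rfl (fun j (_ : j ∈ Finset.univ) =>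
    (show (((α + Finsupp.single i 1 : Fin d →₀ ℕ) j).factorial : ℝ) =
      ((α j).factorial : ℝ) * (if j = i then ((α i + 1 : ℕ) : ℝ) else 1) by
      by_cases h : j = i
      · subst h; simp [Nat.factorial_succ, mul_comm]
      · simp [h, Finsupp.single_eq_of_ne (Ne.symm h)])), Finset.prod_mul_distrib,
    Finset.prod_ite_eq' Finset.univ i (fun _ => ((α i + 1 : ℕ) : ℝ))]
  simp [mul_comm]

/-- the (real) apolar pairing on polynomials -/
noncomputable def apolar (p q : P) : ℝ := ∑ α ∈ p.support, coeff α p * coeff α q * fac α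

theorem apolar_eq_sum {p q : P} {s : Finset (Fin d →₀ ℕ)} (h : p.support ⊆ s) :
    apolar p q = ∑ α ∈ s, coeff α p * coeff α q * fac α := by
  unfold apolar
  refine Finset.sum_subset h ?_
  intro α _ hα
  rw [notMem_support_iff] at hα
  simp [hα]

theorem apolar_add_left (p q r : P) : apolar (p + q) r = apolar p r + apolar q r := by
  rw [apolar_eq_sum (s := p.support ∪ q.support) (fun x hx => support_add hx),
    apolar_eq_sum (s := p.support ∪ q.support) (Finset.subset_union_left),
    apolar_eq_sum (s := p.support ∪ q.support) (Finset.subset_union_right),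
    ← Finset.sum_add_distrib]
  exact Finset.sum_congr rfl fun α _ => by rw [coeff_add]; ring

theorem apolar_zero_left (q : P) : apolar 0 q = 0 := by simp [apolar]

theorem apolar_C_mul_left (c : ℝ) (p q : P) : apolar (C c * p) q = c * apolar p q := by
  rw [apolar_eq_sum (s := p.support)
    (by rw [← smul_eq_C_mul]; exact Finsupp.support_smul), apolar, Finset.mul_sum]
  exact Finset.sum_congr rfl fun α _ => by rw [coeff_C_mul]; ring

theorem apolar_sum_left {ι : Type*} (t : Finset ι) (f : ι → P) (q : P) :
    apolar (∑ i ∈ t, f i) q = ∑ i ∈ t, apolar (f i) q := by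
  induction t using Finset.cons_induction with
  | empty => simp [apolar_zero_left]
  | cons i t hi ih => rw [Finset.sum_cons, Finset.sum_cons, apolar_add_left, ih]

theorem apolar_add_right (p q r : P) : apolar p (q + r) = apolar p q + apolar p r := by
  unfold apolar
  rw [← Finset.sum_add_distrib]
  exact Finset.sum_congr rfl fun α _ => by rw [coeff_add]; ring

theorem apolar_zero_right (p : P) : apolar p 0 = 0 := by simp [apolar]

theorem apolar_C_mul_right (c : ℝ) (p q : P) : apolar p (C c * q) = c * apolar p q := by
  unfold apolar
  rw [Finset.mul_sum]
  exact Finset.sum_congr rfl fun α _ => by rw [coeff_C_mul]; ring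

theorem apolar_sum_right {ι : Type*} (t : Finset ι) (p : P) (f : ι → P) :
    apolar p (∑ i ∈ t, f i) = ∑ i ∈ t, apolar p (f i) := by
  induction t using Finset.cons_induction with
  | empty => simp [apolar_zero_right]
  | cons i t hi ih => rw [Finset.sum_cons, Finset.sum_cons, apolar_add_right, ih]

theorem apolar_monomial_left (s : Fin d →₀ ℕ) (a : ℝ) (q : P) :
    apolar (monomial s a) q = a * coeff s q * fac s := by
  rw [apolar_eq_sum (support_monomial_subset), Finset.sum_singleton, coeff_monomial, if_pos rfl]

theorem apolar_X_mul (i : Fin d) (p q : P) :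
    apolar (X i * p) q = apolar p (pderiv i q) := by
  induction p using MvPolynomial.induction_on' with
  | add p q hp hq => rw [mul_add, apolar_add_left, apolar_add_left, hp, hq]
  | monomial s a =>
    rw [show (X i * monomial s a : P) = monomial (s + Finsupp.single i 1) a by
      rw [X, monomial_mul, one_mul, add_comm],
      apolar_monomial_left, apolar_monomial_left, coeff_pderiv, fac_add_single]
    ring

theorem apolar_self_pos {p : P} (h : p ≠ 0) : 0 < apolar p p := by
  apply Finset.sum_pos
  · intro α hα
    rw [mem_support_iff] at hα
    exact mul_pos (mul_self_pos.mpr hα) (fac_pos α)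
  · rw [Finset.nonempty_iff_ne_empty, Ne, support_eq_empty]
    exact h






theorem sum4_comm {α : Type*} [AddCommMonoid α] (f : Fin d → Fin d → Fin d → Fin d → α) :
    ∑ k, ∑ l, ∑ a, ∑ b, f k l a b = ∑ a, ∑ b, ∑ k, ∑ l, f k l a b := by
  calc ∑ k, ∑ l, ∑ a, ∑ b, f k l a b
      = ∑ k, ∑ a, ∑ l, ∑ b, f k l a b :=
        Finset.sum_congr rfl fun k _ => Finset.sum_comm
    _ = ∑ a, ∑ k, ∑ l, ∑ b, f k l a b := Finset.sum_comm
    _ = ∑ a, ∑ k, ∑ b, ∑ l, f k l a b :=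
        Finset.sum_congr rfl fun a _ => Finset.sum_congr rfl fun k _ => Finset.sum_comm
    _ = ∑ a, ∑ b, ∑ k, ∑ l, f k l a b :=
        Finset.sum_congr rfl fun a _ => Finset.sum_comm

/-- second-order constant-coefficient operator attached to a matrix -/
noncomputable def Dop (M : Matrix (Fin d) (Fin d) ℝ) (p : P) : P :=
  ∑ i, ∑ j, C (M i j) * pderiv i (pderiv j p)

/-- the quadratic form of a matrix, as a polynomial -/
noncomputable def qform (M : Matrix (Fin d) (Fin d) ℝ) : P :=
  ∑ i, ∑ j, C (M i j) * (X i * X j)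

/-- the standard sum of squares -/
noncomputable def sform : P := ∑ i : Fin d, X i ^ 2

/-- substitution x ↦ S x -/
noncomputable def substS (S : Matrix (Fin d) (Fin d) ℝ) :
    MvPolynomial (Fin d) ℝ →ₐ[ℝ] MvPolynomial (Fin d) ℝ :=
  aeval fun i => ∑ j, C (S i j) * X j

theorem substS_X (S : Matrix (Fin d) (Fin d) ℝ) (i : Fin d) :
    substS S (X i) = ∑ j, C (S i j) * X j := aeval_X _ _

theorem substS_C (S : Matrix (Fin d) (Fin d) ℝ) (c : ℝ) : substS S (C c) = C c := by
  simp [substS, algHom_C]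

theorem apolar_qform_mul (B : Matrix (Fin d) (Fin d) ℝ) (hB : ∀ i j, B i j = B j i)
    (w z : P) : apolar (qform B * w) z = apolar w (Dop B z) := by
  have lhs : apolar (qform B * w) z = ∑ i, ∑ j, B i j * apolar w (pderiv j (pderiv i z)) := by
    unfold qform
    rw [Finset.sum_mul, apolar_sum_left]
    refine Finset.sum_congr rfl fun i _ => ?_
    rw [Finset.sum_mul, apolar_sum_left]
    refine Finset.sum_congr rfl fun j _ => ?_
    rw [show (C (B i j) * (X i * X j) * w : P) = C (B i j) * (X i * (X j * w)) by ring,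
      apolar_C_mul_left, apolar_X_mul, apolar_X_mul]
  have rhs : apolar w (Dop B z) = ∑ i, ∑ j, B i j * apolar w (pderiv i (pderiv j z)) := by
    unfold Dop
    rw [apolar_sum_right]
    refine Finset.sum_congr rfl fun i _ => ?_
    rw [apolar_sum_right]
    exact Finset.sum_congr rfl fun j _ => apolar_C_mul_right _ _ _
  rw [lhs, rhs, Finset.sum_comm]
  exact Finset.sum_congr rfl fun i _ => Finset.sum_congr rfl fun j _ => by rw [hB j i]

theorem pderiv_substS (S : Matrix (Fin d) (Fin d) ℝ) (k : Fin d) (p : P) :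
    pderiv k (substS S p) = ∑ i, C (S i k) * substS S (pderiv i p) := by
  induction p using MvPolynomial.induction_on with
  | C a => simp [substS_C]
  | add p q hp hq => simp only [map_add, hp, hq, mul_add, Finset.sum_add_distrib]
  | mul_X p j hp =>
    rw [map_mul, pderiv_mul, hp, substS_X]
    have hXj : pderiv k (∑ l, C (S j l) * X l : P) = C (S j k) := by
      rw [map_sum, Finset.sum_eq_single k]
      · rw [pderiv_C_mul, pderiv_X_self, mul_one]
      · intro l _ hl; rw [pderiv_C_mul, pderiv_X_of_ne hl, mul_zero]
      · intro h; exact absurd (Finset.mem_univ k) h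
    rw [hXj]
    have key : ∀ i : Fin d, C (S i k) * substS S (pderiv i (p * X j)) =
        C (S i k) * (substS S (pderiv i p) * (∑ l, C (S j l) * X l)) +
          (if i = j then substS S p * C (S i k) else 0) := by
      intro i
      rw [pderiv_mul, map_add, map_mul, map_mul, substS_X, mul_add]
      congr 1
      by_cases h : i = j
      · subst h; rw [if_pos rfl, pderiv_X_self, map_one, mul_one]; ring
      · rw [if_neg h, pderiv_X_of_ne fun hh => h hh.symm, map_zero, mul_zero, mul_zero]
    rw [Finset.sum_congr rfl fun i _ => key i, Finset.sum_add_distrib,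
      Finset.sum_ite_eq' Finset.univ j (fun i => substS S p * C (S i k)),
      if_pos (Finset.mem_univ j), Finset.sum_mul]
    simp only [mul_assoc]

theorem substS_substS (S T : Matrix (Fin d) (Fin d) ℝ) (p : P) :
    substS S (substS T p) = substS (T * S) p := by
  have : (substS S).comp (substS T) = substS (T * S) := by
    apply MvPolynomial.algHom_ext
    intro i
    rw [AlgHom.comp_apply]
    calc substS S (substS T (X i))
        = ∑ j, ∑ k, C (T i j) * (C (S j k) * X k) := by
          rw [substS_X, map_sum]
          refine Finset.sum_congr rfl fun j _ => ?_
          rw [map_mul, substS_C, substS_X, Finset.mul_sum]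
      _ = ∑ k, ∑ j, C (T i j * S j k) * X k := by
          rw [Finset.sum_comm]
          refine Finset.sum_congr rfl fun k _ => Finset.sum_congr rfl fun j _ => ?_
          rw [map_mul]; ring
      _ = ∑ k, C ((T * S) i k) * X k := by
          refine Finset.sum_congr rfl fun k _ => ?_
          rw [Matrix.mul_apply, map_sum, Finset.sum_mul]
      _ = substS (T * S) (X i) := (substS_X _ _).symm
  exact DFunLike.congr_fun this p

theorem substS_one (p : P) : substS (1 : Matrix (Fin d) (Fin d) ℝ) p = p := by
  have : substS (1 : Matrix (Fin d) (Fin d) ℝ) = AlgHom.id ℝ (MvPolynomial (Fin d) ℝ) := by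
    apply MvPolynomial.algHom_ext
    intro i
    rw [substS_X, AlgHom.id_apply, Finset.sum_eq_single i]
    · rw [Matrix.one_apply_eq, map_one, one_mul]
    · intro l _ hl; rw [Matrix.one_apply_ne (Ne.symm hl), map_zero, zero_mul]
    · intro h; exact absurd (Finset.mem_univ i) h
  rw [this, AlgHom.id_apply]

theorem Dop_substS (S M N : Matrix (Fin d) (Fin d) ℝ)
    (h : ∀ a b, N a b = ∑ k, ∑ l, S a k * M k l * S b l) (p : P) :
    Dop M (substS S p) = substS S (Dop N p) := by
  have step : ∀ k l : Fin d, pderiv k (pderiv l (substS S p)) =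
      ∑ a, ∑ b, C (S a k) * (C (S b l) * substS S (pderiv a (pderiv b p))) := by
    intro k l
    calc pderiv k (pderiv l (substS S p))
        = pderiv k (∑ b, C (S b l) * substS S (pderiv b p)) := by rw [pderiv_substS]
      _ = ∑ b, C (S b l) * ∑ a, C (S a k) * substS S (pderiv a (pderiv b p)) := by
          rw [map_sum]
          exact Finset.sum_congr rfl fun b _ => by rw [pderiv_C_mul, pderiv_substS]
      _ = ∑ a, ∑ b, C (S a k) * (C (S b l) * substS S (pderiv a (pderiv b p))) := by
          simp only [Finset.mul_sum]
          rw [Finset.sum_comm]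
          exact Finset.sum_congr rfl fun a _ => Finset.sum_congr rfl fun b _ => by ring
  calc Dop M (substS S p)
      = ∑ k, ∑ l, ∑ a, ∑ b,
          C (M k l) * (C (S a k) * (C (S b l) * substS S (pderiv a (pderiv b p)))) := by
        unfold Dop
        refine Finset.sum_congr rfl fun k _ => Finset.sum_congr rfl fun l _ => ?_
        rw [step k l, Finset.mul_sum]
        exact Finset.sum_congr rfl fun a _ => by rw [Finset.mul_sum]
    _ = ∑ a, ∑ b, ∑ k, ∑ l,
          C (M k l) * (C (S a k) * (C (S b l) * substS S (pderiv a (pderiv b p)))) :=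
        sum4_comm _
    _ = ∑ a, ∑ b, C (N a b) * substS S (pderiv a (pderiv b p)) := by
        refine Finset.sum_congr rfl fun a _ => Finset.sum_congr rfl fun b _ => ?_
        rw [h a b, map_sum, Finset.sum_mul]
        refine Finset.sum_congr rfl fun k _ => ?_
        rw [map_sum, Finset.sum_mul]
        refine Finset.sum_congr rfl fun l _ => ?_
        rw [map_mul, map_mul]
        ring
    _ = substS S (Dop N p) := by
        unfold Dop
        rw [map_sum]
        refine Finset.sum_congr rfl fun a _ => ?_
        rw [map_sum]
        exact Finset.sum_congr rfl fun b _ => by rw [map_mul, substS_C]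

theorem substS_sform (S B : Matrix (Fin d) (Fin d) ℝ)
    (h : ∀ j k, ∑ i, S i j * S i k = B j k) :
    substS S sform = qform B := by
  calc substS S sform
      = ∑ i : Fin d, (∑ j, C (S i j) * X j) ^ 2 := by
        unfold sform
        rw [map_sum]
        exact Finset.sum_congr rfl fun i _ => by rw [map_pow, substS_X]
    _ = ∑ i : Fin d, ∑ j, ∑ k, (C (S i j) * X j) * (C (S i k) * X k) := by
        refine Finset.sum_congr rfl fun i _ => ?_
        rw [sq, Finset.sum_mul_sum]
    _ = ∑ j, ∑ k, ∑ i, (C (S i j) * X j) * (C (S i k) * X k) := by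
        rw [Finset.sum_comm]
        exact Finset.sum_congr rfl fun j _ => Finset.sum_comm
    _ = qform B := by
        unfold qform
        refine Finset.sum_congr rfl fun j _ => Finset.sum_congr rfl fun k _ => ?_
        rw [← h j k, map_sum, Finset.sum_mul]
        exact Finset.sum_congr rfl fun i _ => by rw [map_mul]; ring

theorem qform_ne_zero {M : Matrix (Fin d) (Fin d) ℝ} (hM : M.PosDef) (hd : 0 < d) :
    (qform M : P) ≠ 0 := by
  intro h0
  have hx : (fun _ => (1:ℝ) : Fin d → ℝ) ≠ 0 := by
    intro h
    have := congrFun h ⟨0, hd⟩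
    norm_num at this
  have hpos := hM.dotProduct_mulVec_pos hx
  have heval : eval (fun _ => (1:ℝ)) (qform M) =
      dotProduct (star (fun _ => (1:ℝ) : Fin d → ℝ)) (M.mulVec fun _ => (1:ℝ)) := by
    unfold qform
    simp [dotProduct, Matrix.mulVec, eval_sum, Finset.mul_sum]
  rw [h0, map_zero] at heval
  rw [← heval] at hpos
  exact lt_irrefl _ hpos

theorem key_qform {B : Matrix (Fin d) (Fin d) ℝ} (hB : ∀ i j, B i j = B j i)
    (hq : (qform B : P) ≠ 0) {w : P} (h : Dop B (qform B * w) = 0) : w = 0 := by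
  by_contra hw
  have h0 : apolar (qform B * w) (qform B * w) = 0 := by
    rw [apolar_qform_mul B hB, h, apolar_zero_right]
  exact absurd h0 (ne_of_gt (apolar_self_pos (mul_ne_zero hq hw)))

theorem posDef_of_sq {M A : Matrix (Fin d) (Fin d) ℝ} (hM : M.PosSemidef)
    (hMA : M * M = A) (hA : A.PosDef) : M.PosDef := by
  refine Matrix.posDef_iff_dotProduct_mulVec.mpr ⟨hM.1, fun x hx => ?_⟩
  rcases (hM.dotProduct_mulVec_nonneg x).lt_or_eq with hlt | heq
  · exact hlt
  · exfalso
    have hMx : M.mulVec x = 0 := (hM.dotProduct_mulVec_zero_iff x).mp heq.symm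
    have hAx : A.mulVec x = 0 := by
      rw [← hMA, ← Matrix.mulVec_mulVec, hMx, Matrix.mulVec_zero]
    have hApos := hA.dotProduct_mulVec_pos hx
    rw [hAx, dotProduct_zero] at hApos
    exact lt_irrefl _ hApos

/-- the key injectivity fact: if `Δ_A (|x|² u) = 0` for a positive definite `A`, then `u = 0`. -/
theorem key_inj {A : Matrix (Fin d) (Fin d) ℝ} (hA : A.PosDef) (hd : 0 < d)
    {u : P} (h : Dop A (sform * u) = 0) : u = 0 := by
  classical
  have hex : ∀ B : Matrix (Fin d) (Fin d) ℝ, B.PosSemidef →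
      ∃ M : Matrix (Fin d) (Fin d) ℝ, M.PosSemidef ∧ M * M = B := by
    intro B hB
    open scoped MatrixOrder in
    exact ⟨CFC.sqrt B, Matrix.nonneg_iff_posSemidef.mp (CFC.sqrt_nonneg B), CFC.sqrt_mul_sqrt_self B hB.nonneg⟩
  obtain ⟨M2, hM2psd, hM2sq⟩ := hex A hA.posSemidef
  have hM2pd : M2.PosDef := posDef_of_sq hM2psd hM2sq hA
  obtain ⟨M1, hM1psd, hM1sq⟩ := hex M2 hM2psd
  have hM1pd : M1.PosDef := posDef_of_sq hM1psd hM1sq hM2pd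
  have hM1sym : ∀ i j, M1 i j = M1 j i := by
    intro i j
    conv_lhs => rw [← hM1psd.1]
    rfl
  have hM2sym : ∀ i j, M2 i j = M2 j i := by
    intro i j
    conv_lhs => rw [← hM2psd.1]
    rfl
  -- M1ᵀ M1 = M2 entrywise
  have hSB : ∀ j k, ∑ i, M1 i j * M1 i k = M2 j k := by
    intro j k
    rw [← hM1sq, Matrix.mul_apply]
    exact Finset.sum_congr rfl fun i _ => by rw [hM1sym i j]
  -- A = M1 M2 M1 entrywise
  have hN : ∀ a b, A a b = ∑ k, ∑ l, M1 a k * M2 k l * M1 b l := by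
    intro a b
    have hfac : A = M1 * M2 * M1 := by
      rw [← hM2sq, ← hM1sq]
      simp only [Matrix.mul_assoc]
    calc A a b = ∑ l, (∑ k, M1 a k * M2 k l) * M1 l b := by
          rw [hfac, Matrix.mul_apply]
          exact Finset.sum_congr rfl fun l _ => by rw [Matrix.mul_apply]
      _ = ∑ l, ∑ k, M1 a k * M2 k l * M1 b l := by
          refine Finset.sum_congr rfl fun l _ => ?_
          rw [Finset.sum_mul]
          exact Finset.sum_congr rfl fun k _ => by rw [hM1sym l b]
      _ = ∑ k, ∑ l, M1 a k * M2 k l * M1 b l := Finset.sum_comm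
  have h2 : Dop M2 (qform M2 * substS M1 u) = 0 := by
    have e1 : substS M1 (sform * u) = qform M2 * substS M1 u := by
      rw [map_mul, substS_sform M1 M2 hSB]
    rw [← e1, Dop_substS M1 M2 A hN, h, map_zero]
  have hw : substS M1 u = 0 := key_qform hM2sym (qform_ne_zero hM2pd hd) h2
  have hid : substS M1⁻¹ (substS M1 u) = u := by
    rw [substS_substS,
      Matrix.mul_nonsing_inv M1 ((Matrix.isUnit_iff_isUnit_det M1).mp hM1pd.isUnit),
      substS_one]
  rw [hw, map_zero] at hid
  exact hid.symm






theorem degree_eq_sum_univ (α : Fin d →₀ ℕ) : Finsupp.degree α = ∑ j, α j := by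
  refine Finset.sum_subset (Finset.subset_univ _) ?_
  intro j _ hj
  rwa [Finsupp.notMem_support_iff] at hj

theorem degree_add_single (α : Fin d →₀ ℕ) (i : Fin d) :
    Finsupp.degree (α + Finsupp.single i 1) = Finsupp.degree α + 1 := by
  rw [degree_eq_sum_univ, degree_eq_sum_univ]
  have : ∀ j, (α + Finsupp.single i 1 : Fin d →₀ ℕ) j = α j + Finsupp.single i 1 j :=
    fun j => Finsupp.add_apply α (Finsupp.single i 1) j
  rw [Finset.sum_congr rfl fun j _ => this j, Finset.sum_add_distrib]
  congr 1
  rw [Finset.sum_congr rfl fun j (_ : j ∈ Finset.univ) => Finsupp.single_apply (a := i) (b := 1) (a' := j),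
    Finset.sum_ite_eq Finset.univ i (fun _ => 1), if_pos (Finset.mem_univ i)]

theorem totalDegree_le_of_coeff {p : P} {n : ℕ}
    (h : ∀ α : Fin d →₀ ℕ, n < Finsupp.degree α → coeff α p = 0) : p.totalDegree ≤ n := by
  refine Finset.sup_le fun α hα => ?_
  by_contra hlt
  rw [not_le] at hlt
  have : Finsupp.degree α = α.sum fun _ e => e := rfl
  rw [mem_support_iff] at hα
  exact hα (h α (by rwa [this]))

theorem coeff_eq_zero_of_degree_gt {p : P} {α : Fin d →₀ ℕ}
    (h : p.totalDegree < Finsupp.degree α) : coeff α p = 0 :=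
  coeff_eq_zero_of_totalDegree_lt h

theorem coeff_Dop (M : Matrix (Fin d) (Fin d) ℝ) (p : P) (α : Fin d →₀ ℕ) :
    coeff α (Dop M p) = ∑ i, ∑ j, M i j * (((α i + 1 : ℕ) : ℝ) *
      ((((α + Finsupp.single i 1 : Fin d →₀ ℕ) j + 1 : ℕ) : ℝ) *
        coeff (α + Finsupp.single i 1 + Finsupp.single j 1) p)) := by
  unfold Dop
  rw [coeff_sum]
  refine Finset.sum_congr rfl fun i _ => ?_
  rw [coeff_sum]
  refine Finset.sum_congr rfl fun j _ => ?_
  rw [coeff_C_mul, coeff_pderiv, coeff_pderiv]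

theorem Dop_totalDegree_le {M : Matrix (Fin d) (Fin d) ℝ} {p : P} {n : ℕ}
    (h : p.totalDegree ≤ n + 2) : (Dop M p).totalDegree ≤ n := by
  refine totalDegree_le_of_coeff fun α hα => ?_
  rw [coeff_Dop]
  refine Finset.sum_eq_zero fun i _ => Finset.sum_eq_zero fun j _ => ?_
  rw [coeff_eq_zero_of_degree_gt, mul_zero, mul_zero, mul_zero]
  rw [degree_add_single, degree_add_single]
  omega

theorem homogeneousComponent_Dop_eq_zero {M : Matrix (Fin d) (Fin d) ℝ} {p : P} {m : ℕ}
    (h : p.totalDegree ≤ m + 1) : homogeneousComponent m (Dop M p) = 0 := by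
  ext α
  rw [coeff_homogeneousComponent, coeff_zero]
  by_cases hdeg : Finsupp.degree α = m
  · rw [if_pos hdeg, coeff_Dop]
    refine Finset.sum_eq_zero fun i _ => Finset.sum_eq_zero fun j _ => ?_
    rw [coeff_eq_zero_of_degree_gt, mul_zero, mul_zero, mul_zero]
    rw [degree_add_single, degree_add_single]
    omega
  · rw [if_neg hdeg]

theorem pderiv_isHomogeneous {p : P} {n : ℕ} (hp : p.IsHomogeneous (n + 1)) (i : Fin d) :
    (pderiv i p).IsHomogeneous n := by
  intro α hα
  rw [coeff_pderiv] at hα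
  have h2 : coeff (α + Finsupp.single i 1) p ≠ 0 := by
    intro h0
    rw [h0, mul_zero] at hα
    exact hα rfl
  have hw := hp h2
  have e : ∀ β : Fin d →₀ ℕ, (Finsupp.weight 1) β = Finsupp.degree β := fun β => by
    rw [Finsupp.degree_eq_weight_one]; rfl
  rw [e, degree_add_single] at hw
  rw [e]
  omega

theorem sform_isHomogeneous : (sform : P).IsHomogeneous 2 :=
  IsHomogeneous.sum _ _ _ fun i _ => isHomogeneous_X_pow i 2

theorem Dop_isHomogeneous {M : Matrix (Fin d) (Fin d) ℝ} {p : P} {m : ℕ}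
    (hp : p.IsHomogeneous (m + 2)) : (Dop M p).IsHomogeneous m := by
  refine IsHomogeneous.sum _ _ _ fun i _ => IsHomogeneous.sum _ _ _ fun j _ => ?_
  refine IsHomogeneous.C_mul ?_ _
  exact pderiv_isHomogeneous (pderiv_isHomogeneous (by rwa [show m + 2 = (m + 1) + 1 by omega] at hp) j) i

theorem homogeneousComponent_top_ne_zero {v : P} (hv : v ≠ 0) :
    homogeneousComponent v.totalDegree v ≠ 0 := by
  obtain ⟨α, hmem, hsup⟩ := Finset.exists_mem_eq_sup v.support
    (by rwa [Finset.nonempty_iff_ne_empty, Ne, support_eq_empty]) (fun s => s.sum fun _ e => e)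
  intro h0
  have hcoeff : coeff α (homogeneousComponent v.totalDegree v) = coeff α v := by
    rw [coeff_homogeneousComponent, if_pos]
    exact (show Finsupp.degree α = v.totalDegree from hsup.symm)
  rw [h0, coeff_zero] at hcoeff
  rw [mem_support_iff] at hmem
  exact hmem hcoeff.symm

theorem Dop_add (M : Matrix (Fin d) (Fin d) ℝ) (p q : P) :
    Dop M (p + q) = Dop M p + Dop M q := by
  unfold Dop
  rw [← Finset.sum_add_distrib]
  refine Finset.sum_congr rfl fun i _ => ?_
  rw [← Finset.sum_add_distrib]
  refine Finset.sum_congr rfl fun j _ => ?_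
  rw [map_add, map_add, mul_add]

theorem Dop_C_mul (M : Matrix (Fin d) (Fin d) ℝ) (c : ℝ) (p : P) :
    Dop M (C c * p) = C c * Dop M p := by
  unfold Dop
  rw [Finset.mul_sum]
  refine Finset.sum_congr rfl fun i _ => ?_
  rw [Finset.mul_sum]
  refine Finset.sum_congr rfl fun j _ => ?_
  rw [pderiv_C_mul, pderiv_C_mul]
  ring






section Chi
variable (x₀ : Fin d → ℝ) (r : ℝ)

noncomputable def chi : P := (∑ i, (X i - C (x₀ i)) ^ 2) - C (r ^ 2)

noncomputable def rho : P := (∑ i, (C (x₀ i * x₀ i) - C (2 * x₀ i) * X i)) - C (r ^ 2)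

theorem chi_eq : chi x₀ r = sform + rho x₀ r := by
  unfold chi rho sform
  have : (∑ i, (X i - C (x₀ i)) ^ 2 : P)
      = ∑ i, (X i ^ 2 + (C (x₀ i * x₀ i) - C (2 * x₀ i) * X i)) := by
    refine Finset.sum_congr rfl fun i _ => ?_
    rw [map_mul, map_mul, map_ofNat]
    ring
  rw [this, Finset.sum_add_distrib]
  ring

theorem rho_totalDegree_le : (rho x₀ r : P).totalDegree ≤ 1 := by
  unfold rho
  refine le_trans (totalDegree_sub _ _) ?_
  rw [max_le_iff]
  constructor
  · refine le_trans (totalDegree_finset_sum _ _) ?_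
    refine Finset.sup_le fun i _ => ?_
    refine le_trans (totalDegree_sub _ _) ?_
    rw [max_le_iff]
    refine ⟨by rw [totalDegree_C]; omega, ?_⟩
    refine le_trans (totalDegree_mul _ _) ?_
    rw [totalDegree_C, totalDegree_X]
  · rw [totalDegree_C]; omega

theorem chi_totalDegree_le : (chi x₀ r : P).totalDegree ≤ 2 := by
  unfold chi
  refine le_trans (totalDegree_sub _ _) ?_
  rw [max_le_iff]
  constructor
  · refine le_trans (totalDegree_finset_sum _ _) ?_
    refine Finset.sup_le fun i _ => ?_
    refine le_trans (totalDegree_pow _ _) ?_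
    have : ((X i - C (x₀ i) : P)).totalDegree ≤ 1 := by
      refine le_trans (totalDegree_sub _ _) ?_
      rw [max_le_iff, totalDegree_C]
      exact ⟨le_of_eq (totalDegree_X i), by omega⟩
    omega
  · rw [totalDegree_C]; omega

theorem sform_totalDegree_le : (sform : P).totalDegree ≤ 2 := by
  unfold sform
  refine le_trans (totalDegree_finset_sum _ _) ?_
  refine Finset.sup_le fun i _ => ?_
  refine le_trans (totalDegree_pow _ _) ?_
  rw [totalDegree_X]

end Chi

theorem Dop_chi_inj {A : Matrix (Fin d) (Fin d) ℝ} (hA : A.PosDef) (hd : 0 < d)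
    (x₀ : Fin d → ℝ) (r : ℝ) {v : P} (h : Dop A (chi x₀ r * v) = 0) : v = 0 := by
  by_contra hv
  set m := v.totalDegree with hm
  set u := homogeneousComponent m v with hu
  set w := v - u with hw
  have hvw : v = u + w := by rw [hw]; ring
  have hsplit : chi x₀ r * v = sform * u + (sform * w + rho x₀ r * v) := by
    rw [chi_eq, hvw]
    ring
  -- degree of w is < m in the coeff sense
  have hwcoeff : ∀ α : Fin d →₀ ℕ, m ≤ Finsupp.degree α → coeff α w = 0 := by
    intro α hα
    rcases eq_or_lt_of_le hα with heq | hlt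
    · rw [hw, coeff_sub, hu, coeff_homogeneousComponent, if_pos heq.symm, sub_self]
    · rw [hw, coeff_sub, hu, coeff_homogeneousComponent, if_neg (by omega),
        coeff_eq_zero_of_degree_gt hlt, sub_zero]
  have hsw : (sform * w : P).totalDegree ≤ m + 1 := by
    by_cases hw0 : w = 0
    · rw [hw0, mul_zero, totalDegree_zero]; omega
    · have hm1 : 1 ≤ m := by
        by_contra hm0
        apply hw0
        have : m = 0 := by omega
        ext α
        rw [coeff_zero]
        exact hwcoeff α (by omega)
      have hwdeg : w.totalDegree ≤ m - 1 :=
        totalDegree_le_of_coeff fun α hα => hwcoeff α (by omega)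
      refine le_trans (totalDegree_mul _ _) ?_
      have := sform_totalDegree_le (d := d)
      omega
  have hrv : (rho x₀ r * v : P).totalDegree ≤ m + 1 := by
    refine le_trans (totalDegree_mul _ _) ?_
    have := rho_totalDegree_le x₀ r (d := d)
    omega
  have hhomog : (Dop A (sform * u)).IsHomogeneous m := by
    refine Dop_isHomogeneous ?_
    have := sform_isHomogeneous.mul (homogeneousComponent_isHomogeneous m v)
    rwa [show m + 2 = 2 + m by omega]
  have hzero : Dop A (sform * u) = 0 := by
    have h1 : homogeneousComponent m (Dop A (chi x₀ r * v)) = 0 := by rw [h, map_zero]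
    rw [hsplit, Dop_add, Dop_add, map_add, map_add,
      homogeneousComponent_Dop_eq_zero hsw, homogeneousComponent_Dop_eq_zero hrv,
      add_zero, add_zero,
      homogeneousComponent_of_mem ((mem_homogeneousSubmodule _ _).mpr hhomog),
      if_pos rfl] at h1
    exact h1
  exact (homogeneousComponent_top_ne_zero hv) (key_inj hA hd hzero)






/-- the map Q as a linear endomorphism of polynomials -/
noncomputable def Qlin (A : Matrix (Fin d) (Fin d) ℝ) (x₀ : Fin d → ℝ) (r : ℝ) :
    MvPolynomial (Fin d) ℝ →ₗ[ℝ] MvPolynomial (Fin d) ℝ where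
  toFun v := -(Dop A (chi x₀ r * v))
  map_add' a b := by
    show -(Dop A (chi x₀ r * (a + b))) = -(Dop A (chi x₀ r * a)) + -(Dop A (chi x₀ r * b))
    rw [mul_add, Dop_add, neg_add]
  map_smul' c a := by
    show -(Dop A (chi x₀ r * (c • a))) = c • -(Dop A (chi x₀ r * a))
    rw [smul_eq_C_mul, smul_eq_C_mul, mul_left_comm, Dop_C_mul, mul_neg]

theorem Qlin_injective {A : Matrix (Fin d) (Fin d) ℝ} (hA : A.PosDef) (hd : 0 < d)
    (x₀ : Fin d → ℝ) (r : ℝ) : Function.Injective (Qlin A x₀ r) := by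
  rw [injective_iff_map_eq_zero]
  intro v hv
  refine Dop_chi_inj hA hd x₀ r (v := v) ?_
  have : -(Dop A (chi x₀ r * v)) = 0 := hv
  rwa [neg_eq_zero] at this

theorem Qlin_mem {A : Matrix (Fin d) (Fin d) ℝ} (x₀ : Fin d → ℝ) (r : ℝ) {n : ℕ}
    (v : P) (hv : v ∈ restrictTotalDegree (Fin d) ℝ n) :
    Qlin A x₀ r v ∈ restrictTotalDegree (Fin d) ℝ n := by
  rw [mem_restrictTotalDegree] at hv ⊢
  show (-(Dop A (chi x₀ r * v))).totalDegree ≤ n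
  rw [totalDegree_neg]
  refine Dop_totalDegree_le ?_
  refine le_trans (totalDegree_mul _ _) ?_
  have := chi_totalDegree_le x₀ r (d := d)
  omega

theorem exists_unique_solution {A : Matrix (Fin d) (Fin d) ℝ} (hA : A.PosDef) (hd : 0 < d)
    (x₀ : Fin d → ℝ) (r : ℝ) (n : ℕ) (q : P) (hq : q.totalDegree ≤ n) :
    ∃! v : P, v.totalDegree ≤ n ∧ Qlin A x₀ r v = q := by
  classical
  set V := restrictTotalDegree (Fin d) ℝ n with hV
  have hmem : ∀ v ∈ V, Qlin A x₀ r v ∈ V := fun v hv => Qlin_mem x₀ r v hv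
  set f := (Qlin A x₀ r).restrict hmem with hf
  have hfinj : Function.Injective f := by
    intro a b hab
    have : Qlin A x₀ r (a : P) = Qlin A x₀ r (b : P) := by
      have := congrArg Subtype.val hab
      simpa [hf, LinearMap.restrict_apply] using this
    exact Subtype.ext (Qlin_injective hA hd x₀ r this)
  have hfsurj : Function.Surjective f := (LinearMap.injective_iff_surjective).mp hfinj
  obtain ⟨⟨v, hv⟩, hfv⟩ := hfsurj ⟨q, (mem_restrictTotalDegree _ _ _).mpr hq⟩
  have hQv : Qlin A x₀ r v = q := by
    have := congrArg Subtype.val hfv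
    simpa [hf, LinearMap.restrict_apply] using this
  refine ⟨v, ⟨(mem_restrictTotalDegree _ _ _).mp hv, hQv⟩, ?_⟩
  intro v' ⟨hv', hQv'⟩
  exact Qlin_injective hA hd x₀ r (hQv'.trans hQv.symm)

end Stmt4Aux

open MvPolynomial

/-- for a constant symmetric positive definite matrix A and
χ(x) = |x-x₀|² - r² (vanishing on the sphere ∂B), the map
Q(v) = -∑_{i,j} A_{ij} ∂_i∂_j (χ v) is a bijection of ℙ_{k-2}, expressed as:
for each q of degree ≤ k-2 there is a unique v of degree ≤ k-2 with Q(v) = q. -/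
theorem stmt4 (d k : ℕ) (hd : 0 < d) (hk : 2 ≤ k)
    (A : Matrix (Fin d) (Fin d) ℝ) (hA : A.PosDef)
    (x₀ : Fin d → ℝ) (r : ℝ) (hr : 0 < r) :
    ∀ q : MvPolynomial (Fin d) ℝ, q.totalDegree ≤ k - 2 →
      ∃! v : MvPolynomial (Fin d) ℝ, v.totalDegree ≤ k - 2 ∧
        -(∑ i, ∑ j, MvPolynomial.C (A i j) *
            MvPolynomial.pderiv i (MvPolynomial.pderiv j
              (((∑ i, (MvPolynomial.X i - MvPolynomial.C (x₀ i)) ^ 2)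
                  - MvPolynomial.C (r ^ 2)) * v))) = q := by
  intro q hq
  exact Stmt4Aux.exists_unique_solution hA hd x₀ r (k - 2) q hq
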